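/- arXiv:2411.05235 — 7 statements merged into one kernel-verified Lean document; each statement's English description precedes it below -/
import Mathlib

section
/- Invariance of the deterministic model: Let R : ℝ → ℝ be differentiable on [0,∞) and satisfy R'(t) = βR(t)(N − R(t))/(1 + εR(t)) − (γ+μ)R(t) for all t ≥ 0. If R(0) ∈ (0, N), then R(t) ∈ (0, N) for all t ≥ 0. -/
open Set Filter Topology

/-- Invariance of the deterministic model: if `R` solves
`R' = β R (N - R)/(1 + ε R) - (γ + μ) R` on `[0, ∞)` and `R 0 ∈ (0, N)`,
then `R t ∈ (0, N)` for all `t ≥ 0`. -/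
theorem deterministic_invariance
    (β γ μ N ε : ℝ) (hβ : 0 < β) (hγ : 0 < γ) (hμ : 0 < μ) (hN : 0 < N) (hε : 0 < ε)
    (R : ℝ → ℝ)
    (hode : ∀ t ≥ (0:ℝ),
      HasDerivAt R (β * R t * (N - R t) / (1 + ε * R t) - (γ + μ) * R t) t)
    (h0 : R 0 ∈ Set.Ioo (0:ℝ) N) :
    ∀ t ≥ (0:ℝ), R t ∈ Set.Ioo (0:ℝ) N := by
  by_contra hcon
  push_neg at hcon
  obtain ⟨T, hT0, hTnot⟩ := hcon
  -- exit set
  set E : Set ℝ := {t | 0 ≤ t ∧ R t ∉ Set.Ioo (0:ℝ) N} with hE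
  have hEne : E.Nonempty := ⟨T, hT0, hTnot⟩
  have hEbdd : BddBelow E := ⟨0, fun t ht => ht.1⟩
  set t₀ := sInf E with ht₀
  have ht₀0 : 0 ≤ t₀ := le_csInf hEne fun t ht => ht.1
  have hcontAt : ∀ t ≥ (0:ℝ), ContinuousAt R t := fun t ht => (hode t ht).continuousAt
  -- R t₀ not in Ioo
  have ht₀E : R t₀ ∉ Set.Ioo (0:ℝ) N := by
    intro hmem
    have hc := hcontAt t₀ ht₀0
    have hnhds : R ⁻¹' (Set.Ioo (0:ℝ) N) ∈ 𝓝 t₀ :=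
      hc.preimage_mem_nhds (isOpen_Ioo.mem_nhds hmem)
    obtain ⟨δ, hδ, hball⟩ := Metric.mem_nhds_iff.1 hnhds
    obtain ⟨e, heE, helt⟩ := exists_lt_of_csInf_lt hEne (lt_add_of_pos_right t₀ hδ)
    have hge : t₀ ≤ e := csInf_le hEbdd heE
    have : e ∈ Metric.ball t₀ δ := by
      rw [Metric.mem_ball, Real.dist_eq, abs_of_nonneg (by linarith)]
      linarith
    exact heE.2 (hball this)
  have ht₀pos : 0 < t₀ := by
    rcases lt_or_eq_of_le ht₀0 with h | h
    · exact h
    · exact absurd (h ▸ h0) ht₀E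
  -- before t₀, R ∈ Ioo
  have hbefore : ∀ t, 0 ≤ t → t < t₀ → R t ∈ Set.Ioo (0:ℝ) N := by
    intro t ht htlt
    by_contra hnot
    exact absurd (csInf_le hEbdd ⟨ht, hnot⟩) (not_le.2 htlt)
  -- R t₀ ∈ Icc 0 N by continuity from the left
  have hmemIcc : R t₀ ∈ Set.Icc (0:ℝ) N := by
    have hc : Tendsto R (𝓝[<] t₀) (𝓝 (R t₀)) :=
      ((hcontAt t₀ ht₀0).continuousWithinAt)
    have hev : ∀ᶠ t in 𝓝[<] t₀, R t ∈ Set.Icc (0:ℝ) N := by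
      filter_upwards [Ioo_mem_nhdsLT ht₀pos] with t ht
      exact Set.mem_Icc_of_Ioo (hbefore t ht.1.le ht.2)
    exact isClosed_Icc.mem_of_tendsto hc hev
  have hcase : R t₀ = 0 ∨ R t₀ = N := by
    rcases eq_or_lt_of_le hmemIcc.1 with h | h
    · exact Or.inl h.symm
    rcases eq_or_lt_of_le hmemIcc.2 with h2 | h2
    · exact Or.inr h2
    exact absurd ⟨h, h2⟩ ht₀E
  rcases hcase with hzero | hNcase
  · -- Gronwall case: R t₀ = 0 contradicts positivity
    set c := γ + μ with hc
    set g : ℝ → ℝ := fun t => R t * Real.exp (c * t) with hg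
    have hIcc : ∀ t ∈ Set.Icc (0:ℝ) t₀, R t ∈ Set.Icc (0:ℝ) N := by
      intro t ht
      rcases lt_or_eq_of_le ht.2 with h | h
      · exact Set.mem_Icc_of_Ioo (hbefore t ht.1 h)
      · rw [h, hzero]; exact ⟨le_refl _, hN.le⟩
    have hderiv : ∀ t ∈ Set.Icc (0:ℝ) t₀,
        HasDerivAt g ((β * R t * (N - R t) / (1 + ε * R t)) * Real.exp (c * t)) t := by
      intro t ht
      have h1 := (hode t ht.1).mul ((Real.hasDerivAt_exp (c*t)).comp t
        ((hasDerivAt_id t).const_mul c))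
      convert h1 using 1
      · rfl
      · rfl
      · rfl
      have hR0 : 0 ≤ R t := (hIcc t ht).1
      rw [Function.comp_apply]
      ring_nf
    have hmono : MonotoneOn g (Set.Icc (0:ℝ) t₀) := by
      apply monotoneOn_of_hasDerivWithinAt_nonneg (convex_Icc _ _)
        (f' := fun t => (β * R t * (N - R t) / (1 + ε * R t)) * Real.exp (c * t))
      · intro t ht
        exact (hderiv t ht).continuousAt.continuousWithinAt
      · intro t ht
        rw [interior_Icc] at ht
        exact (hderiv t (Set.mem_Icc_of_Ioo ht)).hasDerivWithinAt
      · intro t ht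
        rw [interior_Icc] at ht
        have hRt := hbefore t ht.1.le ht.2
        have h1 : 0 < 1 + ε * R t := by nlinarith [hRt.1]
        have h2 : 0 ≤ β * R t * (N - R t) :=
          mul_nonneg (mul_nonneg hβ.le hRt.1.le) (sub_nonneg.2 hRt.2.le)
        positivity
    have h1 : g 0 ≤ g t₀ := hmono ⟨le_refl _, ht₀0⟩ ⟨ht₀0, le_refl _⟩ ht₀0
    have hg0 : g 0 = R 0 := by simp [hg]
    have hgt : g t₀ = 0 := by simp [hg, hzero]
    rw [hg0, hgt] at h1
    linarith [h0.1]
  · -- boundary case R t₀ = N : derivative is negative, contradiction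
    have hv := hode t₀ ht₀0
    set v := β * R t₀ * (N - R t₀) / (1 + ε * R t₀) - (γ + μ) * R t₀ with hvdef
    have hvneg : v < 0 := by
      rw [hvdef, hNcase]
      simp only [sub_self, mul_zero, zero_div]
      nlinarith
    have hslope : Tendsto (slope R t₀) (𝓝[≠] t₀) (𝓝 v) :=
      hasDerivAt_iff_tendsto_slope.1 hv
    have hslope' : Tendsto (slope R t₀) (𝓝[<] t₀) (𝓝 v) :=
      hslope.mono_left (nhdsWithin_mono _ fun x hx => ne_of_lt hx)
    have hevneg : ∀ᶠ t in 𝓝[<] t₀, slope R t₀ t < 0 :=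
      hslope' (Iio_mem_nhds hvneg)
    have hevIoo : ∀ᶠ t in 𝓝[<] t₀, t ∈ Set.Ioo (0:ℝ) t₀ :=
      Ioo_mem_nhdsLT ht₀pos
    obtain ⟨t, hts, htI⟩ := (hevneg.and hevIoo).exists
    have hRlt : R t < N := (hbefore t htI.1.le htI.2).2
    have : 0 < R t - R t₀ := by
      have hd : t - t₀ < 0 := by linarith [htI.2]
      have hp : 0 < slope R t₀ t * (t - t₀) := mul_pos_of_neg_of_neg hts hd
      rwa [slope_def_field, div_mul_cancel₀ _ (sub_ne_zero.2 (ne_of_lt htI.2))] at hp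
    rw [hNcase] at this
    linarith
end

section
/- Asymptotic stability of the trivial equilibrium: Assume βN < γ + μ. Then R = 0 is an asymptotically stable equilibrium of the deterministic model, in the following sense: (i) for every ε' > 0 there exists δ > 0 such that every differentiable R : ℝ → ℝ satisfying R'(t) = βR(t)(N − R(t))/(1 + εR(t)) − (γ+μ)R(t) for t ≥ 0 with R(0) ∈ (0, δ) and R(t) ∈ (0, N) for all t ≥ 0 satisfies R(t) < ε' for all t ≥ 0; and (ii) there exists δ > 0 such that every such solution with R(0) ∈ (0, δ) satisfies R(t) → 0 as t → ∞. -/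
/-- Gronwall-type decay estimate: `R t * exp (c t) ≤ R 0` for `c = γ + μ - β N`. -/
lemma det_key_bound (β γ μ N ε : ℝ) (hβ : 0 < β) (hε : 0 < ε)
    (hK : β * N < γ + μ) (R : ℝ → ℝ)
    (hderiv : ∀ t ≥ (0:ℝ),
      HasDerivAt R (β * R t * (N - R t) / (1 + ε * R t) - (γ + μ) * R t) t)
    (hrange : ∀ t ≥ (0:ℝ), R t ∈ Set.Ioo (0:ℝ) N) :
    ∀ t ≥ (0:ℝ), R t * Real.exp ((γ + μ - β * N) * t) ≤ R 0 := by
  set c : ℝ := γ + μ - β * N with hc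
  have hcpos : 0 < c := by simp [hc]; linarith
  set g : ℝ → ℝ := fun t => R t * Real.exp (c * t) with hg
  have hgderiv : ∀ t ≥ (0:ℝ), HasDerivAt g
      ((β * R t * (N - R t) / (1 + ε * R t) - (γ + μ) * R t) * Real.exp (c * t)
        + R t * (Real.exp (c * t) * c)) t := by
    intro t ht
    have h := (hderiv t ht).mul (((hasDerivAt_id t).const_mul c).exp)
    simp only [id_eq, mul_one] at h
    exact h
  have hanti : AntitoneOn g (Set.Ici (0:ℝ)) := by
    apply antitoneOn_of_deriv_nonpos (convex_Ici 0)
    · intro t ht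
      exact ((hgderiv t ht).continuousAt).continuousWithinAt
    · intro t ht
      rw [interior_Ici] at ht
      exact ((hgderiv t (le_of_lt ht)).differentiableAt).differentiableWithinAt
    · intro t ht
      rw [interior_Ici] at ht
      rw [(hgderiv t (le_of_lt ht)).deriv]
      have hx := hrange t (le_of_lt ht)
      obtain ⟨hx0, hxN⟩ := hx
      have hden : (0:ℝ) < 1 + ε * R t := by positivity
      have h1 : β * R t * (N - R t) / (1 + ε * R t) ≤ β * R t * N := by
        rw [div_le_iff₀ hden]
        nlinarith [mul_pos hβ hx0, mul_pos (mul_pos hβ hx0) hx0,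
          mul_pos hε hx0, mul_pos (mul_pos hβ hx0) (mul_pos hε hx0),
          mul_pos (mul_pos (mul_pos hβ hx0) hx0) (mul_pos hε hx0)]
      have hexp : (0:ℝ) < Real.exp (c * t) := Real.exp_pos _
      have h2 : β * R t * (N - R t) / (1 + ε * R t) - (γ + μ) * R t + c * R t ≤ 0 := by
        have : β * R t * N - (γ + μ) * R t + c * R t = 0 := by rw [hc]; ring
        linarith
      nlinarith [mul_nonpos_of_nonpos_of_nonneg h2 (le_of_lt hexp)]
  intro t ht
  have := hanti (Set.self_mem_Ici) ht ht
  simpa [hg] using this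

/-- Asymptotic stability of the trivial equilibrium `R = 0` of the
deterministic model `R' = β R (N - R)/(1 + ε R) - (γ + μ) R` when `β N < γ + μ`. -/
theorem deterministic_asymptotic_stability_zero
    (β γ μ N ε : ℝ) (hβ : 0 < β) (hγ : 0 < γ) (hμ : 0 < μ) (hN : 0 < N) (hε : 0 < ε)
    (hK : β * N < γ + μ) :
    (∀ ε' > (0:ℝ), ∃ δ > (0:ℝ), ∀ R : ℝ → ℝ,
      (∀ t ≥ (0:ℝ),
        HasDerivAt R (β * R t * (N - R t) / (1 + ε * R t) - (γ + μ) * R t) t) →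
      R 0 ∈ Set.Ioo (0:ℝ) δ →
      (∀ t ≥ (0:ℝ), R t ∈ Set.Ioo (0:ℝ) N) →
      ∀ t ≥ (0:ℝ), R t < ε') ∧
    (∃ δ > (0:ℝ), ∀ R : ℝ → ℝ,
      (∀ t ≥ (0:ℝ),
        HasDerivAt R (β * R t * (N - R t) / (1 + ε * R t) - (γ + μ) * R t) t) →
      R 0 ∈ Set.Ioo (0:ℝ) δ →
      (∀ t ≥ (0:ℝ), R t ∈ Set.Ioo (0:ℝ) N) →
      Filter.Tendsto R Filter.atTop (nhds 0)) := by
  have hcpos : 0 < γ + μ - β * N := by linarith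
  constructor
  · intro ε' hε'
    refine ⟨ε', hε', fun R hderiv h0 hrange t ht => ?_⟩
    have hkey := det_key_bound β γ μ N ε hβ hε hK R hderiv hrange t ht
    have hexp1 : (1:ℝ) ≤ Real.exp ((γ + μ - β * N) * t) :=
      Real.one_le_exp (by positivity)
    have hRt : 0 < R t := (hrange t ht).1
    nlinarith [h0.2]
  · refine ⟨1, one_pos, fun R hderiv h0 hrange => ?_⟩
    have hkey := det_key_bound β γ μ N ε hβ hε hK R hderiv hrange
    have hupper : Filter.Tendsto (fun t => R 0 * Real.exp (-((γ + μ - β * N) * t)))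
        Filter.atTop (nhds 0) := by
      have h1 : Filter.Tendsto (fun t : ℝ => (γ + μ - β * N) * t)
          Filter.atTop Filter.atTop :=
        Filter.Tendsto.const_mul_atTop hcpos Filter.tendsto_id
      have h2 : Filter.Tendsto (fun t : ℝ => Real.exp (-((γ + μ - β * N) * t)))
          Filter.atTop (nhds 0) :=
        Real.tendsto_exp_neg_atTop_nhds_zero.comp h1
      simpa using h2.const_mul (R 0)
    apply tendsto_of_tendsto_of_tendsto_of_le_of_le' tendsto_const_nhds hupper
    · filter_upwards [Filter.eventually_ge_atTop (0:ℝ)] with t ht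
      exact le_of_lt (hrange t ht).1
    · filter_upwards [Filter.eventually_ge_atTop (0:ℝ)] with t ht
      have := hkey t ht
      have hexp : (0:ℝ) < Real.exp ((γ + μ - β * N) * t) := Real.exp_pos _
      rw [Real.exp_neg, ← div_eq_mul_inv, le_div_iff₀ hexp]
      exact this
end

section
/- Asymptotic stability of the nontrivial equilibrium: Assume βN > γ + μ and set ξ = (βN − γ − μ)/(β + ε(γ+μ)). Then ξ is an asymptotically stable equilibrium of the deterministic model, in the following sense: (i) for every ε' > 0 there exists δ > 0 such that every differentiable R : ℝ → ℝ satisfying R'(t) = βR(t)(N − R(t))/(1 + εR(t)) − (γ+μ)R(t) for t ≥ 0 with |R(0) − ξ| < δ and R(t) ∈ (0, N) for all t ≥ 0 satisfies |R(t) − ξ| < ε' for all t ≥ 0; and (ii) there exists δ > 0 such that every such solution with |R(0) − ξ| < δ satisfies R(t) → ξ as t → ∞. -/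
/-- Derivative of the Lyapunov function `V = (R - ξ)²` along solutions. -/
private lemma hasDerivV_aux (β γ μ N ε ξ : ℝ) (hβ : 0 < β) (hγ : 0 < γ) (hμ : 0 < μ)
    (hε : 0 < ε) (hξ : ξ = (β * N - γ - μ) / (β + ε * (γ + μ)))
    (R : ℝ → ℝ)
    (hR : ∀ t ≥ (0:ℝ), HasDerivAt R (β * R t * (N - R t) / (1 + ε * R t) - (γ + μ) * R t) t)
    (hRin : ∀ t ≥ (0:ℝ), R t ∈ Set.Ioo (0:ℝ) N) :
    ∀ t ≥ (0:ℝ), HasDerivAt (fun s => (R s - ξ)^2)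
      (-(2 * (β + ε * (γ + μ)) * R t * (R t - ξ)^2 / (1 + ε * R t))) t := by
  intro t ht
  have hA : 0 < β + ε * (γ + μ) := by positivity
  have hRt : 0 < R t := (hRin t ht).1
  have hden : (0:ℝ) < 1 + ε * R t := by positivity
  have h1 := ((hR t ht).sub_const ξ).pow 2
  convert h1 using 1
  · rfl
  · rfl
  · rfl
  have hAne : (β + ε * (γ + μ)) ≠ 0 := ne_of_gt hA
  have hdne : (1 + ε * R t) ≠ 0 := ne_of_gt hden
  rw [hξ]
  norm_num
  field_simp
  ring

private lemma antitoneV_aux (β γ μ N ε ξ : ℝ) (hβ : 0 < β) (hγ : 0 < γ) (hμ : 0 < μ)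
    (hε : 0 < ε) (hξ : ξ = (β * N - γ - μ) / (β + ε * (γ + μ)))
    (R : ℝ → ℝ)
    (hR : ∀ t ≥ (0:ℝ), HasDerivAt R (β * R t * (N - R t) / (1 + ε * R t) - (γ + μ) * R t) t)
    (hRin : ∀ t ≥ (0:ℝ), R t ∈ Set.Ioo (0:ℝ) N) :
    AntitoneOn (fun t => (R t - ξ)^2) (Set.Ici (0:ℝ)) := by
  have hA : 0 < β + ε * (γ + μ) := by positivity
  have hV := hasDerivV_aux β γ μ N ε ξ hβ hγ hμ hε hξ R hR hRin
  apply antitoneOn_of_deriv_nonpos (convex_Ici 0)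
  · intro t ht
    exact ((hV t ht).continuousAt).continuousWithinAt
  · rw [interior_Ici]
    intro t ht
    exact (hV t (le_of_lt ht)).differentiableAt.differentiableWithinAt
  · rw [interior_Ici]
    intro t ht
    rw [(hV t (le_of_lt ht)).deriv]
    have hRt : 0 < R t := (hRin t (le_of_lt ht)).1
    have hden : (0:ℝ) < 1 + ε * R t := by positivity
    have : 0 ≤ 2 * (β + ε * (γ + μ)) * R t * (R t - ξ)^2 / (1 + ε * R t) := by positivity
    linarith

/-- Asymptotic stability of the nontrivial equilibrium
`ξ = (β N - γ - μ)/(β + ε (γ + μ))` of the deterministic model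
`R' = β R (N - R)/(1 + ε R) - (γ + μ) R` when `β N > γ + μ`. -/
theorem deterministic_asymptotic_stability_xi
    (β γ μ N ε : ℝ) (hβ : 0 < β) (hγ : 0 < γ) (hμ : 0 < μ) (hN : 0 < N) (hε : 0 < ε)
    (hK : β * N > γ + μ)
    (ξ : ℝ) (hξ : ξ = (β * N - γ - μ) / (β + ε * (γ + μ))) :
    (∀ ε' > (0:ℝ), ∃ δ > (0:ℝ), ∀ R : ℝ → ℝ,
      (∀ t ≥ (0:ℝ),
        HasDerivAt R (β * R t * (N - R t) / (1 + ε * R t) - (γ + μ) * R t) t) →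
      |R 0 - ξ| < δ →
      (∀ t ≥ (0:ℝ), R t ∈ Set.Ioo (0:ℝ) N) →
      ∀ t ≥ (0:ℝ), |R t - ξ| < ε') ∧
    (∃ δ > (0:ℝ), ∀ R : ℝ → ℝ,
      (∀ t ≥ (0:ℝ),
        HasDerivAt R (β * R t * (N - R t) / (1 + ε * R t) - (γ + μ) * R t) t) →
      |R 0 - ξ| < δ →
      (∀ t ≥ (0:ℝ), R t ∈ Set.Ioo (0:ℝ) N) →
      Filter.Tendsto R Filter.atTop (nhds ξ)) := by
  have hA : 0 < β + ε * (γ + μ) := by positivity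
  have hξpos : 0 < ξ := by
    rw [hξ]; apply div_pos (by linarith) hA
  constructor
  · -- stability
    intro ε' hε'
    refine ⟨ε', hε', ?_⟩
    intro R hR h0 hRin t ht
    have hanti := antitoneV_aux β γ μ N ε ξ hβ hγ hμ hε hξ R hR hRin
    have hle : (R t - ξ)^2 ≤ (R 0 - ξ)^2 :=
      hanti (Set.self_mem_Ici) ht ht
    nlinarith [abs_nonneg (R t - ξ), abs_nonneg (R 0 - ξ), sq_abs (R t - ξ), sq_abs (R 0 - ξ)]
  · -- attraction
    refine ⟨ξ/2, by positivity, ?_⟩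
    intro R hR h0 hRin
    have hanti := antitoneV_aux β γ μ N ε ξ hβ hγ hμ hε hξ R hR hRin
    have hV := hasDerivV_aux β γ μ N ε ξ hβ hγ hμ hε hξ R hR hRin
    -- lower bound R t > ξ/2
    have hRlow : ∀ t ≥ (0:ℝ), ξ/2 < R t := by
      intro t ht
      have hle : (R t - ξ)^2 ≤ (R 0 - ξ)^2 := hanti Set.self_mem_Ici ht ht
      have habs : |R t - ξ| < ξ/2 := by
        nlinarith [abs_nonneg (R t - ξ), abs_nonneg (R 0 - ξ), sq_abs (R t - ξ), sq_abs (R 0 - ξ)]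
      have := abs_lt.mp habs
      linarith [this.1]
    set c : ℝ := ξ * (β + ε * (γ + μ)) / (1 + ε * N) with hc_def
    have hden : (0:ℝ) < 1 + ε * N := by positivity
    have hc : 0 < c := by positivity
    -- W = exp(c t) V antitone
    have hW : ∀ t ≥ (0:ℝ), HasDerivAt (fun s => Real.exp (c * s) * (R s - ξ)^2)
        (Real.exp (c * t) * c * (R t - ξ)^2 +
          Real.exp (c * t) * (-(2 * (β + ε * (γ + μ)) * R t * (R t - ξ)^2 / (1 + ε * R t)))) t := by
      intro t ht
      have hexp : HasDerivAt (fun s => Real.exp (c * s)) (Real.exp (c * t) * c) t := by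
        have h := ((hasDerivAt_id t).const_mul c).exp
        simpa using h
      exact hexp.mul (hV t ht)
    have hWanti : AntitoneOn (fun t => Real.exp (c * t) * (R t - ξ)^2) (Set.Ici (0:ℝ)) := by
      apply antitoneOn_of_deriv_nonpos (convex_Ici 0)
      · intro t ht
        exact ((hW t ht).continuousAt).continuousWithinAt
      · rw [interior_Ici]
        intro t ht
        exact (hW t (le_of_lt ht)).differentiableAt.differentiableWithinAt
      · rw [interior_Ici]
        intro t ht
        rw [(hW t (le_of_lt ht)).deriv]
        have hRt : 0 < R t := (hRin t (le_of_lt ht)).1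
        have hRN : R t < N := (hRin t (le_of_lt ht)).2
        have hRl : ξ/2 < R t := hRlow t (le_of_lt ht)
        have hdR : (0:ℝ) < 1 + ε * R t := by positivity
        have hexp : (0:ℝ) < Real.exp (c * t) := Real.exp_pos _
        have hkey : c ≤ 2 * (β + ε * (γ + μ)) * R t / (1 + ε * R t) := by
          rw [hc_def, div_le_div_iff₀ hden hdR]
          nlinarith [mul_pos hA hRt, mul_pos hε (mul_pos hA hRt)]
        have hsq : (0:ℝ) ≤ (R t - ξ)^2 := sq_nonneg _
        have h2 : c * (R t - ξ)^2 ≤ 2 * (β + ε * (γ + μ)) * R t * (R t - ξ)^2 / (1 + ε * R t) := by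
          have := mul_le_mul_of_nonneg_right hkey hsq
          calc c * (R t - ξ)^2 ≤ 2 * (β + ε * (γ + μ)) * R t / (1 + ε * R t) * (R t - ξ)^2 := this
            _ = 2 * (β + ε * (γ + μ)) * R t * (R t - ξ)^2 / (1 + ε * R t) := by ring
        nlinarith [mul_le_mul_of_nonneg_left h2 hexp.le]
    -- V t ≤ V 0 * exp (-(c t))
    have hVbound : ∀ t ≥ (0:ℝ), (R t - ξ)^2 ≤ (R 0 - ξ)^2 * Real.exp (-(c * t)) := by
      intro t ht
      have h1 : Real.exp (c * t) * (R t - ξ)^2 ≤ (R 0 - ξ)^2 := by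
        have := hWanti Set.self_mem_Ici ht ht
        simpa using this
      have hexp : (0:ℝ) < Real.exp (c * t) := Real.exp_pos _
      rw [Real.exp_neg, ← div_eq_mul_inv]
      rw [le_div_iff₀ hexp]
      linarith [h1, mul_comm (Real.exp (c * t)) ((R t - ξ)^2)]
    -- tendsto of V to 0
    have hg : Filter.Tendsto (fun t => (R 0 - ξ)^2 * Real.exp (-(c * t)))
        Filter.atTop (nhds 0) := by
      have h1 : Filter.Tendsto (fun t : ℝ => c * t) Filter.atTop Filter.atTop :=
        Filter.Tendsto.const_mul_atTop hc Filter.tendsto_id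
      have h2 : Filter.Tendsto (fun t : ℝ => Real.exp (-(c * t))) Filter.atTop (nhds 0) :=
        Real.tendsto_exp_neg_atTop_nhds_zero.comp h1
      have := h2.const_mul ((R 0 - ξ)^2)
      simpa using this
    have hVtend : Filter.Tendsto (fun t => (R t - ξ)^2) Filter.atTop (nhds 0) := by
      apply squeeze_zero' ?_ ?_ hg
      · exact Filter.Eventually.of_forall (fun t => sq_nonneg _)
      · exact (Filter.eventually_ge_atTop (0:ℝ)).mono (fun t ht => hVbound t ht)
    rw [tendsto_iff_dist_tendsto_zero]
    have hsqrt : Filter.Tendsto (fun t => Real.sqrt ((R t - ξ)^2)) Filter.atTop (nhds 0) := by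
      have := (Real.continuous_sqrt.tendsto 0).comp hVtend
      rwa [Real.sqrt_zero] at this
    refine hsqrt.congr (fun t => ?_)
    rw [Real.sqrt_sq_eq_abs, Real.dist_eq]
end

section
/- Extinction in the deterministic model: Assume βN < γ + μ. Then every differentiable R : ℝ → ℝ satisfying R'(t) = βR(t)(N − R(t))/(1 + εR(t)) − (γ+μ)R(t) for all t ≥ 0, with R(0) ∈ (0, N) and R(t) ∈ (0, N) for all t ≥ 0, satisfies lim_{t→∞} R(t) = 0. -/
/-- Extinction in the deterministic model: if `β N < γ + μ`, every solution of
`R' = β R (N - R)/(1 + ε R) - (γ + μ) R` starting in `(0, N)` and remaining in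
`(0, N)` tends to `0` as `t → ∞`. -/
theorem deterministic_extinction
    (β γ μ N ε : ℝ) (hβ : 0 < β) (hγ : 0 < γ) (hμ : 0 < μ) (hN : 0 < N) (hε : 0 < ε)
    (hK : β * N < γ + μ)
    (R : ℝ → ℝ)
    (hode : ∀ t ≥ (0:ℝ),
      HasDerivAt R (β * R t * (N - R t) / (1 + ε * R t) - (γ + μ) * R t) t)
    (h0 : R 0 ∈ Set.Ioo (0:ℝ) N)
    (hinv : ∀ t ≥ (0:ℝ), R t ∈ Set.Ioo (0:ℝ) N) :
    Filter.Tendsto R Filter.atTop (nhds 0) := by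
  set c : ℝ := (γ + μ) - β * N with hc
  have hcpos : 0 < c := by simp [hc]; linarith
  set g : ℝ → ℝ := fun t => R t * Real.exp (c * t) with hg
  -- derivative of g is nonpositive on (0, ∞)
  have hgderiv : ∀ t ≥ (0:ℝ), HasDerivAt g
      ((β * R t * (N - R t) / (1 + ε * R t) - (γ + μ) * R t) * Real.exp (c * t)
        + R t * (c * Real.exp (c * t))) t := by
    intro t ht
    have he : HasDerivAt (fun t => Real.exp (c * t)) (c * Real.exp (c * t)) t := by
      have := (((hasDerivAt_id t).const_mul c).exp)
      convert this using 1 <;> simp [mul_comm]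
    exact (hode t ht).mul he
  have hgnonpos : ∀ t ≥ (0:ℝ),
      (β * R t * (N - R t) / (1 + ε * R t) - (γ + μ) * R t) * Real.exp (c * t)
        + R t * (c * Real.exp (c * t)) ≤ 0 := by
    intro t ht
    obtain ⟨hR0, hRN⟩ := hinv t ht
    have hden : (0:ℝ) < 1 + ε * R t := by nlinarith
    have hfrac : β * R t * (N - R t) / (1 + ε * R t) ≤ β * N * R t := by
      rw [div_le_iff₀ hden]
      nlinarith [mul_nonneg (mul_nonneg hβ.le hR0.le) hR0.le,
        mul_nonneg (mul_nonneg (mul_nonneg hβ.le hN.le) hε.le) (mul_nonneg hR0.le hR0.le)]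
    have hexp : (0:ℝ) < Real.exp (c * t) := Real.exp_pos _
    have key : β * R t * (N - R t) / (1 + ε * R t) - (γ + μ) * R t + R t * c ≤ 0 := by
      simp only [hc]; nlinarith
    nlinarith [mul_nonpos_of_nonpos_of_nonneg key hexp.le]
  have hanti : AntitoneOn g (Set.Ici 0) := by
    apply antitoneOn_of_deriv_nonpos (convex_Ici 0)
    · intro t ht
      exact ((hgderiv t ht).continuousAt).continuousWithinAt
    · intro t ht
      rw [interior_Ici] at ht
      exact ((hgderiv t ht.le).differentiableAt).differentiableWithinAt
    · intro t ht
      rw [interior_Ici] at ht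
      rw [(hgderiv t ht.le).deriv]
      exact hgnonpos t ht.le
  -- R t ≤ R 0 * exp (-c * t) for t ≥ 0
  have hbound : ∀ t ≥ (0:ℝ), R t ≤ R 0 * Real.exp (-(c * t)) := by
    intro t ht
    have h1 : g t ≤ g 0 := hanti (by exact Set.self_mem_Ici) (Set.mem_Ici.mpr ht) ht
    have h2 : g 0 = R 0 := by simp [hg]
    have hexp : (0:ℝ) < Real.exp (c * t) := Real.exp_pos _
    rw [Real.exp_neg]
    rw [h2] at h1
    have : R t * Real.exp (c * t) ≤ R 0 := h1
    calc R t = R t * Real.exp (c * t) * (Real.exp (c * t))⁻¹ := by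
          field_simp
      _ ≤ R 0 * (Real.exp (c * t))⁻¹ := by
          apply mul_le_mul_of_nonneg_right this (by positivity)
  -- squeeze
  have hupper : Filter.Tendsto (fun t => R 0 * Real.exp (-(c * t))) Filter.atTop (nhds 0) := by
    have he : Filter.Tendsto (fun t => Real.exp (-(c * t))) Filter.atTop (nhds 0) := by
      apply Real.tendsto_exp_atBot.comp
      apply Filter.tendsto_neg_atBot_iff.mpr
      exact (Filter.tendsto_id.const_mul_atTop hcpos)
    simpa using he.const_mul (R 0)
  apply squeeze_zero' ?_ ?_ hupper
  · filter_upwards [Filter.eventually_ge_atTop (0:ℝ)] with t ht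
    exact (hinv t ht).1.le
  · filter_upwards [Filter.eventually_ge_atTop (0:ℝ)] with t ht
    exact hbound t ht
end

section
/- Persistence in the deterministic model: Assume βN > γ + μ and set ξ = (βN − γ − μ)/(β + ε(γ+μ)). Then every differentiable R : ℝ → ℝ satisfying R'(t) = βR(t)(N − R(t))/(1 + εR(t)) − (γ+μ)R(t) for all t ≥ 0, with R(0) ∈ (0, N) and R(t) ∈ (0, N) for all t ≥ 0, satisfies lim_{t→∞} R(t) = ξ. -/
/-- Persistence in the deterministic model: if `β N > γ + μ`, every solution of
`R' = β R (N - R)/(1 + ε R) - (γ + μ) R` starting in `(0, N)` and remaining in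
`(0, N)` tends to `ξ = (β N - γ - μ)/(β + ε (γ + μ))` as `t → ∞`. -/
theorem deterministic_persistence
    (β γ μ N ε : ℝ) (hβ : 0 < β) (hγ : 0 < γ) (hμ : 0 < μ) (hN : 0 < N) (hε : 0 < ε)
    (hK : β * N > γ + μ)
    (ξ : ℝ) (hξ : ξ = (β * N - γ - μ) / (β + ε * (γ + μ)))
    (R : ℝ → ℝ)
    (hode : ∀ t ≥ (0:ℝ),
      HasDerivAt R (β * R t * (N - R t) / (1 + ε * R t) - (γ + μ) * R t) t)
    (h0 : R 0 ∈ Set.Ioo (0:ℝ) N)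
    (hinv : ∀ t ≥ (0:ℝ), R t ∈ Set.Ioo (0:ℝ) N) :
    Filter.Tendsto R Filter.atTop (nhds ξ) := by
  set c : ℝ := β + ε * (γ + μ) with hcdef
  have hcpos : 0 < c := by positivity
  have hnum : 0 < β * N - γ - μ := by linarith
  have hξpos : 0 < ξ := by rw [hξ]; exact div_pos hnum hcpos
  have hξc : ξ * c = β * N - γ - μ := by
    rw [hξ]; field_simp
  set g : ℝ → ℝ := fun t => (ξ - R t) ^ 2 with hgdef
  have hgnonneg : ∀ t, 0 ≤ g t := fun t => sq_nonneg _
  -- derivative of g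
  have hgderiv : ∀ t ≥ (0:ℝ),
      HasDerivAt g (-(2 * c * R t * (ξ - R t) ^ 2 / (1 + ε * R t))) t := by
    intro t ht
    have hR := hode t ht
    have hRpos := (hinv t ht).1
    have hden : (0:ℝ) < 1 + ε * R t := by positivity
    have hd : (1 + ε * R t) ≠ 0 := ne_of_gt hden
    have key : β * R t * (N - R t) / (1 + ε * R t) - (γ + μ) * R t
        = c * R t * (ξ - R t) / (1 + ε * R t) := by
      rw [div_sub' hd, div_eq_div_iff hd hd]
      linear_combination (-(R t) * (1 + ε * R t)) * hξc
    have h1 : HasDerivAt (fun s => ξ - R s)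
        (0 - (β * R t * (N - R t) / (1 + ε * R t) - (γ + μ) * R t)) t :=
      (hasDerivAt_const t ξ).sub hR
    have h2 := h1.pow 2
    refine h2.congr_deriv ?_
    rw [key]
    ring
  have hRcont : ∀ t ≥ (0:ℝ), ContinuousAt R t :=
    fun t ht => (hode t ht).differentiableAt.continuousAt
  have hgcont : ContinuousOn g (Set.Ici (0:ℝ)) := fun t ht =>
    ((continuousAt_const.sub (hRcont t ht)).pow 2).continuousWithinAt
  -- g is antitone on every Ici a with a ≥ 0
  have hant : ∀ a ≥ (0:ℝ), AntitoneOn g (Set.Ici a) := by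
    intro a ha
    apply antitoneOn_of_deriv_nonpos (convex_Ici a)
      (hgcont.mono (Set.Ici_subset_Ici.mpr ha))
    · intro x hx
      rw [interior_Ici] at hx
      exact ((hgderiv x (le_trans ha hx.le)).differentiableAt).differentiableWithinAt
    · intro x hx
      rw [interior_Ici] at hx
      have hx0 : (0:ℝ) ≤ x := le_trans ha hx.le
      rw [(hgderiv x hx0).deriv]
      have hRpos := (hinv x hx0).1
      have hden : (0:ℝ) < 1 + ε * R x := by positivity
      have : 0 ≤ 2 * c * R x * (ξ - R x) ^ 2 / (1 + ε * R x) := by positivity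
      linarith
  -- eventual positive lower bound for R
  obtain ⟨t0, ht0, m, hmpos, hm⟩ :
      ∃ t0 ≥ (0:ℝ), ∃ m > (0:ℝ), ∀ t ≥ t0, m ≤ R t := by
    by_cases hcase : ∀ t ≥ (0:ℝ), ξ ≤ R t
    · exact ⟨0, le_refl _, ξ, hξpos, hcase⟩
    · push_neg at hcase
      obtain ⟨t0, ht0, hlt⟩ := hcase
      refine ⟨t0, ht0, R t0, (hinv t0 ht0).1, fun t ht => ?_⟩
      have h1 : g t ≤ g t0 := hant 0 le_rfl (Set.mem_Ici.mpr ht0)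
        (Set.mem_Ici.mpr (le_trans ht0 ht)) ht
      have h2 := Real.sqrt_le_sqrt h1
      rw [Real.sqrt_sq_eq_abs, Real.sqrt_sq_eq_abs] at h2
      have h3 : |ξ - R t0| = ξ - R t0 := abs_of_pos (by linarith)
      have h4 : ξ - R t ≤ |ξ - R t| := le_abs_self _
      rw [h3] at h2
      linarith
  set κ : ℝ := 2 * c * m / (1 + ε * N) with hκdef
  have hκpos : 0 < κ := by positivity
  -- derivative bound on [t0, ∞)
  have hbound : ∀ t ≥ t0, deriv g t ≤ -κ * g t := by
    intro t ht
    have htnn : (0:ℝ) ≤ t := le_trans ht0 ht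
    rw [(hgderiv t htnn).deriv]
    have hRt := hinv t htnn
    have hmt := hm t ht
    have hden : (0:ℝ) < 1 + ε * R t := by nlinarith [mul_pos hε hRt.1]
    have hdenN : 1 + ε * R t ≤ 1 + ε * N := by nlinarith [hRt.2]
    have hdiv : m / (1 + ε * N) ≤ R t / (1 + ε * R t) :=
      div_le_div₀ hRt.1.le hmt hden hdenN
    have hgt := hgnonneg t
    have h1 : κ * g t ≤ 2 * c * R t * (ξ - R t) ^ 2 / (1 + ε * R t) := by
      have h2 : κ = 2 * c * (m / (1 + ε * N)) := by rw [hκdef]; ring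
      have h3 : 2 * c * R t * (ξ - R t) ^ 2 / (1 + ε * R t)
          = 2 * c * (R t / (1 + ε * R t)) * (ξ - R t) ^ 2 := by ring
      have hgeq : g t = (ξ - R t) ^ 2 := rfl
      rw [h2, h3, hgeq]
      have h4 : 2 * c * (m / (1 + ε * N)) ≤ 2 * c * (R t / (1 + ε * R t)) :=
        mul_le_mul_of_nonneg_left hdiv (by positivity)
      exact mul_le_mul_of_nonneg_right h4 (sq_nonneg _)
    linarith
  -- g tends to 0
  have hg0 : Filter.Tendsto g Filter.atTop (nhds 0) := by
    rw [Metric.tendsto_atTop]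
    intro δ hδ
    have hex : ∃ t1 ≥ t0, g t1 < δ := by
      by_contra hno
      push_neg at hno
      -- then deriv g ≤ -κδ for t ≥ t0, so g decreases linearly: contradiction.
      set h : ℝ → ℝ := fun t => g t + κ * δ * t with hhdef
      have hhant : AntitoneOn h (Set.Ici t0) := by
        apply antitoneOn_of_deriv_nonpos (convex_Ici t0)
        · intro x hx
          exact ((hgcont x (le_trans ht0 hx)).mono
              (Set.Ici_subset_Ici.mpr ht0)).add
            ((continuous_const.mul continuous_id).continuousWithinAt)
        · intro x hx
          rw [interior_Ici] at hx
          have hx0 : (0:ℝ) ≤ x := le_trans ht0 hx.le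
          exact (((hgderiv x hx0).add
            ((hasDerivAt_id x).const_mul (κ * δ))).differentiableAt).differentiableWithinAt
        · intro x hx
          rw [interior_Ici] at hx
          have hx0 : (0:ℝ) ≤ x := le_trans ht0 hx.le
          have hD : HasDerivAt h (-(2 * c * R x * (ξ - R x) ^ 2 / (1 + ε * R x))
              + κ * δ * 1) x :=
            (hgderiv x hx0).add ((hasDerivAt_id x).const_mul (κ * δ))
          rw [hD.deriv]
          have hb := hbound x hx.le
          rw [(hgderiv x hx0).deriv] at hb
          have hgx := hno x hx.le
          have h9 := mul_le_mul_of_nonneg_left hgx hκpos.le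
          linarith
      set T : ℝ := t0 + (g t0 + 1) / (κ * δ) with hTdef
      have hTge : t0 ≤ T := by
        rw [hTdef]
        have h8 : 0 ≤ (g t0 + 1) / (κ * δ) := by positivity
        linarith
      have h5 : h T ≤ h t0 :=
        hhant Set.self_mem_Ici (Set.mem_Ici.mpr hTge) hTge
      have h6 : κ * δ * (T - t0) = g t0 + 1 := by
        rw [hTdef]
        field_simp
        ring
      have h7 := hgnonneg T
      simp only [hhdef] at h5
      nlinarith
    obtain ⟨t1, ht1, hgt1⟩ := hex
    refine ⟨t1, fun t ht => ?_⟩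
    have h1 : g t ≤ g t1 := hant 0 le_rfl
      (Set.mem_Ici.mpr (le_trans ht0 ht1))
      (Set.mem_Ici.mpr (le_trans (le_trans ht0 ht1) ht)) ht
    rw [Real.dist_eq, abs_of_nonneg (by linarith [hgnonneg t] : (0:ℝ) ≤ g t - 0)]
    · linarith
  -- conclude
  have hdist : Filter.Tendsto (fun t => dist (R t) ξ) Filter.atTop (nhds 0) := by
    have h1 := (Real.continuous_sqrt.tendsto 0).comp hg0
    rw [Real.sqrt_zero] at h1
    refine h1.congr fun t => ?_
    show Real.sqrt (g t) = dist (R t) ξ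
    rw [Real.dist_eq, hgdef]
    simp only []
    rw [Real.sqrt_sq_eq_abs, abs_sub_comm]
  exact tendsto_iff_dist_tendsto_zero.mpr hdist
end

section
/- Lyapunov growth bound for the invariance proof: Let V : (0, N) → ℝ be defined by V(R) = 1/R + 1/(N − R), and let c = max(γ+μ, βN). Then for every R ∈ (0, N), (βR(N − R)/(1 + εR) − (γ+μ)R)·(−1/R² + 1/(N − R)²) ≤ c·V(R). -/
/-- Lyapunov growth bound for the invariance proof: with
`V(R) = 1/R + 1/(N - R)` and `c = max (γ + μ) (β N)`, we have
`b(R) · V'(R) ≤ c · V(R)` for every `R ∈ (0, N)`. -/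
theorem lyapunov_growth_bound
    (β γ μ N ε : ℝ) (hβ : 0 < β) (hγ : 0 < γ) (hμ : 0 < μ) (hN : 0 < N) (hε : 0 < ε)
    (c : ℝ) (hc : c = max (γ + μ) (β * N)) :
    ∀ R ∈ Set.Ioo (0:ℝ) N,
      (β * R * (N - R) / (1 + ε * R) - (γ + μ) * R)
          * (-(1 / R ^ 2) + 1 / (N - R) ^ 2)
        ≤ c * (1 / R + 1 / (N - R)) := by
  intro R hR
  obtain ⟨hR0, hRN⟩ := hR
  have hNR : 0 < N - R := by linarith
  have hden : 0 < 1 + ε * R := by positivity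
  have hgm : γ + μ ≤ c := by rw [hc]; exact le_max_left _ _
  have hbN : β * N ≤ c := by rw [hc]; exact le_max_right _ _
  have hc0 : 0 < c := lt_of_lt_of_le (by linarith) hgm
  -- rewrite LHS as a sum of four terms
  have hid : (β * R * (N - R) / (1 + ε * R) - (γ + μ) * R)
          * (-(1 / R ^ 2) + 1 / (N - R) ^ 2)
      = -(β * (N - R) / (R * (1 + ε * R))) + β * R / ((1 + ε * R) * (N - R))
        + (γ + μ) / R - (γ + μ) * R / (N - R) ^ 2 := by
    field_simp
    ring
  rw [hid]
  have h1 : -(β * (N - R) / (R * (1 + ε * R))) ≤ 0 := neg_nonpos.mpr (by positivity)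
  have h2 : β * R / ((1 + ε * R) * (N - R)) ≤ c * (1 / (N - R)) := by
    rw [mul_one_div]
    apply div_le_div₀ hc0.le
    · nlinarith
    · exact hNR
    · nlinarith [mul_pos (mul_pos hε hR0) hNR]
  have h3 : (γ + μ) / R ≤ c * (1 / R) := by
    rw [mul_one_div]
    gcongr
  have h4 : -((γ + μ) * R / (N - R) ^ 2) ≤ 0 := neg_nonpos.mpr (by positivity)
  have : (γ + μ) * R / (N - R) ^ 2 ≥ 0 := by positivity
  linarith [mul_add c (1/R) (1/(N-R))]
end

section
/- Properties of the logarithmic Lyapunov function: Assume βN > γ + μ, set ξ = (βN − γ − μ)/(β + ε(γ+μ)) and c = ξ/(N − ξ), and define V : (0, N) → ℝ by V(R) = c·(N/R − 1) − 1 − ln(c·(N/R − 1)). Then: (i) V(R) ≥ 0 for all R ∈ (0, N), with V(R) = 0 if and only if R = ξ; (ii) for every R ∈ (0, N) with R ≠ ξ, (βR(N − R)/(1 + εR) − (γ+μ)R)·V'(R) < 0; and (iii) V(R) → ∞ as R → 0⁺ and as R → N⁻. -/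
open Real Filter Set

lemma phi_nonneg' {x : ℝ} (hx : 0 < x) : 0 ≤ x - 1 - Real.log x := by
  nlinarith [Real.log_le_sub_one_of_pos hx]

lemma phi_pos' {x : ℝ} (hx : 0 < x) (hx1 : x ≠ 1) : 0 < x - 1 - Real.log x := by
  nlinarith [Real.log_lt_sub_one_of_pos hx hx1]

lemma phi_tendsto_atTop : Tendsto (fun x : ℝ => x - 1 - Real.log x) atTop atTop := by
  refine tendsto_atTop_mono' atTop (f₁ := fun x : ℝ => x / 2 + 1) ?_ ?_
  · filter_upwards [eventually_ge_atTop (16:ℝ)] with x hx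
    have hx0 : (0:ℝ) < x := by linarith
    set s := Real.sqrt x with hs
    have hs0 : 0 ≤ s := Real.sqrt_nonneg x
    have hs2 : s ^ 2 = x := Real.sq_sqrt hx0.le
    have hs4 : 4 ≤ s := by nlinarith
    have hlog : Real.log x ≤ 2 * s - 2 := by
      have := Real.log_le_sub_one_of_pos (show (0:ℝ) < s by linarith)
      have hls : Real.log s = Real.log x / 2 := Real.log_sqrt hx0.le
      linarith
    nlinarith
  · exact (tendsto_atTop_add_const_right _ 1 (Tendsto.atTop_div_const (by norm_num) tendsto_id))

lemma phi_tendsto_zero : Tendsto (fun x : ℝ => x - 1 - Real.log x) (nhdsWithin 0 (Set.Ioi 0)) atTop := by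
  have h1 : Tendsto (fun x : ℝ => -Real.log x) (nhdsWithin 0 (Set.Ioi 0)) atTop := by
    exact tendsto_neg_atBot_atTop.comp Real.tendsto_log_nhdsGT_zero
  have h2 : Tendsto (fun x : ℝ => x - 1) (nhdsWithin 0 (Set.Ioi 0)) (nhds (0 - 1)) := by
    exact (tendsto_id.mono_left nhdsWithin_le_nhds).sub_const 1
  have := h2.add_atTop h1
  simpa [sub_eq_add_neg, add_assoc] using this


/-- Properties of the logarithmic Lyapunov function
`V(R) = c (N/R - 1) - 1 - ln (c (N/R - 1))` with `c = ξ/(N - ξ)`,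
where `ξ = (β N - γ - μ)/(β + ε (γ + μ))` and `β N > γ + μ`:
(i) `V ≥ 0` on `(0, N)` vanishing exactly at `ξ`;
(ii) `b(R) · V'(R) < 0` on `(0, N) \ {ξ}`;
(iii) `V(R) → ∞` as `R → 0⁺` and as `R → N⁻`. -/
theorem log_lyapunov_properties
    (β γ μ N ε : ℝ) (hβ : 0 < β) (hγ : 0 < γ) (hμ : 0 < μ) (hN : 0 < N) (hε : 0 < ε)
    (hK : β * N > γ + μ)
    (ξ : ℝ) (hξ : ξ = (β * N - γ - μ) / (β + ε * (γ + μ)))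
    (c : ℝ) (hc : c = ξ / (N - ξ))
    (V : ℝ → ℝ)
    (hV : ∀ R, V R = c * (N / R - 1) - 1 - Real.log (c * (N / R - 1))) :
    (∀ R ∈ Set.Ioo (0:ℝ) N, 0 ≤ V R ∧ (V R = 0 ↔ R = ξ)) ∧
    (∀ R ∈ Set.Ioo (0:ℝ) N, R ≠ ξ →
      (β * R * (N - R) / (1 + ε * R) - (γ + μ) * R) * deriv V R < 0) ∧
    Filter.Tendsto V (nhdsWithin 0 (Set.Ioi 0)) Filter.atTop ∧
    Filter.Tendsto V (nhdsWithin N (Set.Iio N)) Filter.atTop := by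
  have hVe : V = fun R => c * (N / R - 1) - 1 - Real.log (c * (N / R - 1)) := funext hV
  subst hVe
  set D : ℝ := β + ε * (γ + μ) with hD
  have hD0 : 0 < D := by positivity
  have hξD : ξ * D = β * N - γ - μ := by rw [hξ]; field_simp
  have hξ0 : 0 < ξ := by
    rw [hξ]; apply div_pos (by linarith) hD0
  have hξN : ξ < N := by
    rw [hξ, div_lt_iff₀ hD0, hD]
    nlinarith [mul_pos hN (mul_pos hε (show (0:ℝ) < γ + μ by linarith))]
  have hc0 : 0 < c := by rw [hc]; exact div_pos hξ0 (by linarith)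
  -- key: for R in (0, N), u R > 0 and u R = 1 iff R = ξ
  have hu_pos : ∀ R ∈ Set.Ioo (0:ℝ) N, 0 < c * (N / R - 1) := by
    intro R hR
    have : 1 < N / R := (one_lt_div hR.1).mpr hR.2
    have : 0 < N / R - 1 := by linarith
    positivity
  have hu_sub : ∀ R ∈ Set.Ioo (0:ℝ) N,
      c * (N / R - 1) - 1 = N * (ξ - R) / ((N - ξ) * R) := by
    intro R hR
    rw [hc]
    have h1 : R ≠ 0 := ne_of_gt hR.1
    have h2 : N - ξ ≠ 0 := by intro h; linarith [hξN]
    field_simp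
    ring
  refine ⟨?_, ?_, ?_, ?_⟩
  · intro R hR
    have hup := hu_pos R hR
    constructor
    · exact phi_nonneg' hup
    · constructor
      · intro h
        by_contra hne
        have hu1 : c * (N / R - 1) ≠ 1 := by
          intro h1
          have := hu_sub R hR
          rw [h1] at this
          have h2 : N * (ξ - R) / ((N - ξ) * R) = 0 := by linarith
          have h3 : (N - ξ) * R ≠ 0 := by
            apply mul_ne_zero (by intro h'; linarith) (ne_of_gt hR.1)
          have := (div_eq_zero_iff.mp h2).resolve_right h3
          have : ξ - R = 0 := by
            rcases mul_eq_zero.mp this with h | h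
            · exact absurd h (ne_of_gt hN)
            · exact h
          exact hne (by linarith)
        have := phi_pos' hup hu1
        linarith
      · intro h
        subst h
        have h1 : c * (N / R - 1) = 1 := by
          have := hu_sub R hR
          simp at this
          linarith
        show c * (N / R - 1) - 1 - Real.log (c * (N / R - 1)) = 0
        rw [h1]; simp
  · intro R hR hne
    have hR0 : R ≠ 0 := ne_of_gt hR.1
    have hup := hu_pos R hR
    have hu0 : c * (N / R - 1) ≠ 0 := ne_of_gt hup
    -- derivative
    have h0 : HasDerivAt (fun x : ℝ => x⁻¹) (-((R:ℝ) ^ 2)⁻¹) R := hasDerivAt_inv hR0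
    have h1 : HasDerivAt (fun x : ℝ => c * (N / x - 1)) (c * (N * -(R ^ 2)⁻¹)) R := by
      have := ((h0.const_mul N).sub_const 1).const_mul c
      simpa [div_eq_mul_inv] using this
    have h2 : HasDerivAt (fun x : ℝ => c * (N / x - 1) - 1 - Real.log (c * (N / x - 1)))
        ((c * (N * -(R ^ 2)⁻¹)) - (c * (N * -(R ^ 2)⁻¹)) / (c * (N / R - 1))) R :=
      (h1.sub_const 1).sub (h1.log hu0)
    rw [h2.deriv]
    set A : ℝ := c * (N * -(R ^ 2)⁻¹) with hA
    have hA0 : A < 0 := by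
      rw [hA]
      have : 0 < c * (N * (R ^ 2)⁻¹) :=
        mul_pos hc0 (mul_pos hN (inv_pos.mpr (pow_pos hR.1 2)))
      nlinarith
    set u : ℝ := c * (N / R - 1) with hu
    have hderiv : A - A / u = A * (u - 1) / u := by
      field_simp
    have hden : 0 < (1 : ℝ) + ε * R := by nlinarith [hR.1]
    have hb : β * R * (N - R) / (1 + ε * R) - (γ + μ) * R = R * (D * (ξ - R)) / (1 + ε * R) := by
      have h1 : (1 : ℝ) + ε * R ≠ 0 := ne_of_gt hden
      rw [eq_div_iff h1, sub_mul, div_mul_cancel₀ _ h1]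
      linear_combination (-R) * hξD + R ^ 2 * hD
    rw [hderiv, hb]
    have hu1 : u - 1 = N * (ξ - R) / ((N - ξ) * R) := hu_sub R hR
    have hNξ : 0 < N - ξ := by linarith
    rcases lt_or_gt_of_ne hne with h | h
    · -- R < ξ
      have hξR : 0 < ξ - R := by linarith
      have hbpos : 0 < R * (D * (ξ - R)) / (1 + ε * R) :=
        div_pos (mul_pos hR.1 (mul_pos hD0 hξR)) hden
      have huneg : 0 < u - 1 := by
        rw [hu1]; exact div_pos (mul_pos hN hξR) (mul_pos hNξ hR.1)
      have : A * (u - 1) / u < 0 := by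
        apply div_neg_of_neg_of_pos _ hup
        exact mul_neg_of_neg_of_pos hA0 huneg
      exact mul_neg_of_pos_of_neg hbpos this
    · -- R > ξ
      have hξR : ξ - R < 0 := by linarith
      have hbneg : R * (D * (ξ - R)) / (1 + ε * R) < 0 := by
        apply div_neg_of_neg_of_pos _ hden
        exact mul_neg_of_pos_of_neg hR.1 (mul_neg_of_pos_of_neg hD0 hξR)
      have huneg : u - 1 < 0 := by
        rw [hu1]
        apply div_neg_of_neg_of_pos _ (mul_pos hNξ hR.1)
        exact mul_neg_of_pos_of_neg hN hξR
      have : 0 < A * (u - 1) / u :=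
        div_pos (mul_pos_of_neg_of_neg hA0 huneg) hup
      exact mul_neg_of_neg_of_pos hbneg this
  · -- tendsto at 0+
    have tu : Tendsto (fun R : ℝ => c * (N / R - 1)) (nhdsWithin 0 (Set.Ioi 0)) atTop := by
      have t1 : Tendsto (fun R : ℝ => R⁻¹) (nhdsWithin 0 (Set.Ioi 0)) atTop :=
        tendsto_inv_nhdsGT_zero
      have t2 : Tendsto (fun R : ℝ => N / R) (nhdsWithin 0 (Set.Ioi 0)) atTop := by
        simpa [div_eq_mul_inv] using t1.const_mul_atTop hN
      have t3 : Tendsto (fun R : ℝ => N / R - 1) (nhdsWithin 0 (Set.Ioi 0)) atTop :=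
        tendsto_atTop_add_const_right _ (-1) t2 |>.congr (fun x => by ring)
      exact t3.const_mul_atTop hc0
    exact phi_tendsto_atTop.comp tu
  · -- tendsto at N-
    have tu : Tendsto (fun R : ℝ => c * (N / R - 1)) (nhdsWithin N (Set.Iio N))
        (nhdsWithin 0 (Set.Ioi 0)) := by
      rw [tendsto_nhdsWithin_iff]
      constructor
      · have : ContinuousAt (fun R : ℝ => c * (N / R - 1)) N := by
          exact continuousAt_const.mul ((continuousAt_const.div continuousAt_id hN.ne').sub continuousAt_const)
        have h : Tendsto (fun R : ℝ => c * (N / R - 1)) (nhdsWithin N (Set.Iio N)) (nhds (c * (N / N - 1))) :=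
          this.tendsto.mono_left nhdsWithin_le_nhds
        simpa [div_self hN.ne'] using h
      · filter_upwards [Ioo_mem_nhdsLT_of_mem (show N ∈ Set.Ioc (0:ℝ) N from ⟨hN, le_refl N⟩)] with R hR
        have : 1 < N / R := (one_lt_div hR.1).mpr hR.2
        have : 0 < N / R - 1 := by linarith
        exact Set.mem_Ioi.mpr (by positivity)
    exact phi_tendsto_zero.comp tu
end
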